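/- arXiv:funct-an/9602008 — 3 statements merged into one kernel-verified Lean document; each statement's English description precedes it below -/
import Mathlib

section
/- Let D be a unital C*-algebra with a unique tracial state τ, let B be a finite-dimensional *-subalgebra of D containing the unit of D, and let {P₁,…,P_N} be the set of minimal central projections of B. Then an element x ∈ D commuting with every element of B is independent of B (that is, τ(xy) = τ(x)τ(y) for all y ∈ B) if and only if τ(xP_i) = τ(x)τ(P_i) for every i = 1,…,N. -/
/-!
Statement 6 (Lemma 2.3): let `D` be a unital C*-algebra with a unique tracial state `τ`,
`B ⊆ D` a finite-dimensional unital *-subalgebra with minimal central projections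
`P₁, …, P_N`.  An element `x ∈ D ∩ B'` is independent of `B` (i.e. `τ(xy) = τ(x)τ(y)` for
all `y ∈ B`) iff `τ(x Pᵢ) = τ(x) τ(Pᵢ)` for all `i`.
-/

open scoped ComplexOrder

variable {D : Type*} [CStarAlgebra D]

/-- A tracial state on a unital C*-algebra: a positive linear functional `τ` with
`τ(1) = 1` and `τ(ab) = τ(ba)`. -/
def IsTracialState (τ : D →ₗ[ℂ] ℂ) : Prop :=
  τ 1 = 1 ∧ (∀ a : D, 0 ≤ τ (star a * a)) ∧ ∀ a b : D, τ (a * b) = τ (b * a)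

/-- A central projection of a *-subalgebra `B`: a projection belonging to `B` and
commuting with every element of `B`. -/
def IsCentralProjection (B : StarSubalgebra ℂ D) (p : D) : Prop :=
  p ∈ B ∧ IsSelfAdjoint p ∧ p * p = p ∧ ∀ b ∈ B, b * p = p * b

/-- A minimal central projection of `B`: a nonzero central projection dominating no
nonzero central projection of `B` other than itself. -/
def IsMinimalCentralProjection (B : StarSubalgebra ℂ D) (p : D) : Prop :=
  IsCentralProjection B p ∧ p ≠ 0 ∧
    ∀ q, IsCentralProjection B q → q * p = q → q = 0 ∨ q = p

section AuxNilpotent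

open LinearMap Module Module.End



lemma isNilpotent_of_trace_pow {V : Type*} [AddCommGroup V] [Module ℂ V] [FiniteDimensional ℂ V]
    (f : Module.End ℂ V) (h : ∀ n : ℕ, LinearMap.trace ℂ V (f ^ (n + 1)) = 0) :
    IsNilpotent f := by
  classical
  set N : ℂ → Submodule ℂ V := f.maxGenEigenspace with hN
  have hmap : ∀ μ, Set.MapsTo f (N μ) (N μ) :=
    fun μ => f.mapsTo_maxGenEigenspace_of_comm rfl μ
  have hmapn : ∀ (n : ℕ) μ, Set.MapsTo (f ^ n) (N μ) (N μ) :=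
    fun n μ => f.mapsTo_maxGenEigenspace_of_comm ((Commute.refl f).pow_right n) μ
  have hres : ∀ (n : ℕ) (μ : ℂ), (f ^ n).restrict (hmapn n μ) = (f.restrict (hmap μ)) ^ n := by
    intro n μ
    induction n with
    | zero => ext v; simp [LinearMap.restrict_apply]
    | succ k ih =>
      ext v
      simp only [pow_succ, Module.End.mul_apply, LinearMap.restrict_apply] at *
      simp [← ih, LinearMap.restrict_apply]
      rfl
  have hnil : ∀ μ : ℂ, IsNilpotent (f.restrict (hmap μ) - algebraMap ℂ (Module.End ℂ (N μ)) μ) := by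
    intro μ
    have h1 := f.isNilpotent_restrict_maxGenEigenspace_sub_algebraMap μ
    have h2 : (f - algebraMap ℂ (Module.End ℂ V) μ).restrict
        (mapsTo_maxGenEigenspace_of_comm (Algebra.mul_sub_algebraMap_commutes f μ) μ) =
        f.restrict (hmap μ) - algebraMap ℂ (Module.End ℂ (N μ)) μ := by
      ext v
      rfl
    rwa [h2] at h1
  have htr : ∀ (μ : ℂ) (n : ℕ),
      LinearMap.trace ℂ (N μ) ((f.restrict (hmap μ)) ^ (n+1))
        = μ ^ (n+1) * (finrank ℂ (N μ) : ℂ) := by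
    intro μ n
    induction n with
    | zero =>
      have := LinearMap.trace_comp_eq_mul_of_commute_of_isNilpotent (R := ℂ) (M := N μ) μ
        (Commute.one_left (f.restrict (hmap μ))) (hnil μ)
      simpa [Module.End.mul_eq_comp, LinearMap.trace_one, Module.End.one_eq_id] using this
    | succ k ih =>
      have := LinearMap.trace_comp_eq_mul_of_commute_of_isNilpotent (R := ℂ) (M := N μ) μ
        ((Commute.refl _).pow_left (k+1)) (hnil μ)
      rw [← Module.End.mul_eq_comp, ← pow_succ] at this
      rw [this, ih]; ring
  -- direct sum decomposition
  have hfin : {μ : ℂ | N μ ≠ ⊥}.Finite :=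
    WellFoundedGT.finite_ne_bot_of_iSupIndep f.independent_maxGenEigenspace
  have hds := DirectSum.isInternal_submodule_of_iSupIndep_of_iSup_eq_top
    f.independent_maxGenEigenspace (f.iSup_maxGenEigenspace_eq_top)
  have hsum : ∀ n : ℕ, ∑ μ ∈ hfin.toFinset, μ ^ (n+1) * (finrank ℂ (N μ) : ℂ) = 0 := by
    intro n
    have h0 := LinearMap.trace_eq_sum_trace_restrict' hds hfin (hmapn (n+1))
    rw [h n] at h0
    have h1 : ∑ μ ∈ hfin.toFinset, μ ^ (n+1) * (finrank ℂ (N μ) : ℂ)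
        = ∑ μ ∈ hfin.toFinset,
          LinearMap.trace ℂ (f.maxGenEigenspace μ) ((f ^ (n+1)).restrict (hmapn (n+1) μ)) :=
      Finset.sum_congr rfl fun μ _ => by rw [hres, htr]
    exact h1.trans h0.symm
  have hzero : ∀ μ : ℂ, μ ≠ 0 → N μ = ⊥ := by
    intro μ hμ
    by_contra hne
    have hmem : μ ∈ hfin.toFinset := by simpa using hne
    set s := hfin.toFinset with hs
    set m := s.card
    let em : ↥s ≃ Fin m := s.equivFin
    have hinj : Function.Injective (fun j : Fin m => ((em.symm j : ↥s) : ℂ)) := by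
      intro a b hab
      exact em.symm.injective (Subtype.ext hab)
    have hfv : ∀ i : Fin m, (∑ j : Fin m,
        (((em.symm j : ↥s) : ℂ) * (finrank ℂ (N ((em.symm j : ↥s) : ℂ)) : ℂ))
          * ((em.symm j : ↥s) : ℂ) ^ (i : ℕ)) = 0 := by
      intro i
      have h2 := hsum i
      rw [← Finset.sum_coe_sort] at h2
      rw [Equiv.sum_comp em.symm
        (fun ν : ↥s => ((ν : ℂ) * (finrank ℂ (N (ν : ℂ)) : ℂ)) * (ν : ℂ) ^ (i : ℕ))]
      rw [← h2]
      exact Finset.sum_congr rfl fun ν _ => by ring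
    have hv0 := Matrix.eq_zero_of_forall_pow_sum_mul_pow_eq_zero hinj hfv
    have hμs := congrFun hv0 (em ⟨μ, hmem⟩)
    set ν := em.symm (em ⟨μ, hmem⟩) with hν'
    have hν : (ν : ℂ) = μ := by rw [hν', Equiv.symm_apply_apply]
    simp only [Pi.zero_apply] at hμs
    rcases mul_eq_zero.mp hμs with h1 | h1
    · exact hμ (by rw [← hν]; exact h1)
    · have h4 : finrank ℂ (N (ν : ℂ)) = 0 := by exact_mod_cast h1
      have h3 : N (ν : ℂ) = ⊥ := Submodule.finrank_eq_zero.mp h4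
      exact hne (by rw [← hν]; exact h3)
  have htop : N 0 = ⊤ := by
    refine le_antisymm le_top ?_
    rw [← f.iSup_maxGenEigenspace_eq_top]
    refine iSup_le fun μ => ?_
    by_cases hμ : μ = 0
    · subst hμ; exact le_rfl
    · rw [show f.maxGenEigenspace μ = N μ from rfl, hzero μ hμ]; exact bot_le
  rw [LinearMap.isNilpotent_iff_charpoly, LinearMap.charpoly_eq_X_pow_iff]
  intro v
  have hv : v ∈ N 0 := htop ▸ Submodule.mem_top
  rw [hN, Module.End.mem_maxGenEigenspace] at hv
  obtain ⟨k, hk⟩ := hv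
  exact ⟨k, by simpa using hk⟩

end AuxNilpotent

section AuxCStar


lemma aux_mul_star_eq_zero {a : D} (h : a * star a = 0) : a = 0 := by
  have h2 : ‖a‖ * ‖a‖ = 0 := by rw [← CStarRing.norm_self_mul_star, h, norm_zero]
  simpa using mul_self_eq_zero.mp h2

lemma aux_selfadj_nilpotent {a : D} (hsa : IsSelfAdjoint a) (h : IsNilpotent a) : a = 0 := by
  obtain ⟨n, hn⟩ := h
  obtain ⟨k, hk⟩ : ∃ k : ℕ, n ≤ 2 ^ k := ⟨n, (Nat.lt_two_pow_self (n := n)).le⟩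
  have hz : a ^ (2 ^ k) = 0 := by
    calc a ^ (2 ^ k) = a ^ n * a ^ (2 ^ k - n) := by rw [← pow_add, Nat.add_sub_cancel' hk]
    _ = 0 := by rw [hn, zero_mul]
  have hnorm := hsa.nnnorm_pow_two_pow k
  rw [hz] at hnorm
  simp only [nnnorm_zero] at hnorm
  have : ‖a‖₊ = 0 := by
    have := pow_eq_zero_iff (n := 2 ^ k) (by positivity) |>.mp hnorm.symm
    exact this
  simpa using nnnorm_eq_zero.mp this

lemma aux_nilpotent_star_comm {a : D} (hc : a * star a = star a * a) (h : IsNilpotent a) :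
    a = 0 := by
  obtain ⟨n, hn⟩ := h
  have hd : (a * star a) ^ n = 0 := by
    rw [(Commute.mul_pow hc n : (a * star a) ^ n = a ^ n * (star a) ^ n), hn, zero_mul]
  have : a * star a = 0 :=
    aux_selfadj_nilpotent (by simpa using (IsSelfAdjoint.star_mul_self a).star) ⟨n, hd⟩
  exact aux_mul_star_eq_zero this

-- central idempotent is a projection
lemma aux_central_idem_selfadj {e : D} (hee : e * e = e) (hcomm : e * star e = star e * e) :
    IsSelfAdjoint e := by
  set u := e - e * star e with hu
  have hse : star e * star e = star e := by rw [← star_mul, hee]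
  have h0 : u * star u = 0 := by
    have hsu : star u = star e - e * star e := by
      rw [hu, star_sub, star_mul, star_star]
    rw [hu, hsu]
    have h1 : e * (e * star e) = e * star e := by rw [← mul_assoc, hee]
    have h2 : (e * star e) * star e = e * star e := by rw [mul_assoc, hse]
    have h3 : (e * star e) * (e * star e) = e * star e := by
      calc (e * star e) * (e * star e) = e * (star e * e) * star e := by noncomm_ring
      _ = e * (e * star e) * star e := by rw [← hcomm]
      _ = (e * star e) * star e := by rw [← mul_assoc, hee]
      _ = e * star e := h2
    calc (e - e * star e) * (star e - e * star e)
        = e * star e - e * (e * star e) - ((e * star e) * star e - (e * star e) * (e * star e)) := by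
          noncomm_ring
      _ = 0 := by rw [h1, h2, h3]; abel
  have hu0 : u = 0 := aux_mul_star_eq_zero h0
  have he' : e = e * star e := by rwa [hu, sub_eq_zero] at hu0
  rw [IsSelfAdjoint, he', star_mul, star_star]

end AuxCStar

section AuxSubalgebra

open LinearMap Module

variable (B : StarSubalgebra ℂ D) [FiniteDimensional ℂ B]


-- nilpotent elements of B that commute with their star (in B) vanish
lemma aux_nilpotentB {c : ↥B} (hc : c * star c = star c * c) (h : IsNilpotent c) : c = 0 := by
  obtain ⟨n, hn⟩ := h
  have hD : IsNilpotent (c : D) := ⟨n, by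
    have := congrArg (Subtype.val) hn
    push_cast at this
    simpa using this⟩
  have hcD : (c : D) * star (c : D) = star (c : D) * (c : D) := by
    have := congrArg (Subtype.val) hc
    push_cast at this
    exact this
  have := aux_nilpotent_star_comm hcD hD
  exact Subtype.ext (by simpa using this)

noncomputable abbrev lmB : ↥B →ₐ[ℂ] Module.End ℂ ↥B := Algebra.lmul ℂ ↥B

-- if all iterated traces vanish, c is nilpotent
lemma aux_nilpotent_of_traces (c : ↥B)
    (h : ∀ n : ℕ, LinearMap.trace ℂ ↥B (lmB B (c ^ (n+1))) = 0) : IsNilpotent c := by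
  have h2 : ∀ n : ℕ, LinearMap.trace ℂ ↥B ((lmB B c) ^ (n+1)) = 0 := by
    intro n; rw [← map_pow]; exact h n
  obtain ⟨m, hm⟩ := isNilpotent_of_trace_pow _ h2
  refine ⟨m, Algebra.lmul_injective (R := ℂ) (A := ↥B) ?_⟩
  rw [map_pow, map_zero]
  exact hm

-- S1 : nondegeneracy of the trace form
lemma aux_traceform_nondeg (c : ↥B)
    (h : ∀ b : ↥B, LinearMap.trace ℂ ↥B (lmB B c * lmB B b) = 0) : c = 0 := by
  have hstar : ∀ d : ↥B, (∀ b : ↥B, LinearMap.trace ℂ ↥B (lmB B d * lmB B b) = 0) →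
      IsNilpotent d := by
    intro d hd
    refine aux_nilpotent_of_traces B d fun n => ?_
    have : (d : ↥B) ^ (n+1) = d * d ^ n := by rw [pow_succ']
    rw [this, map_mul (lmB B) d (d ^ n)]
    exact hd (d ^ n)
  have hcc : ∀ b : ↥B, LinearMap.trace ℂ ↥B (lmB B (c * star c) * lmB B b) = 0 := by
    intro b
    rw [map_mul (lmB B) c (star c), mul_assoc, ← map_mul (lmB B) (star c) b]
    exact h (star c * b)
  have hnil : IsNilpotent (c * star c) := hstar _ hcc
  -- (c * star c) is selfadjoint-commuting
  obtain ⟨n, hn⟩ := hnil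
  have hD : IsNilpotent ((c : D) * star (c : D)) := ⟨n, by
    have := congrArg (Subtype.val) hn
    push_cast at this
    simpa using this⟩
  have h0 : (c : D) * star (c : D) = 0 := by
    have hsa : IsSelfAdjoint ((c : D) * star (c : D)) := IsSelfAdjoint.mul_star_self _
    -- selfadjoint elements commute with their star
    have := aux_nilpotent_star_comm (a := (c : D) * star (c : D)) (by rw [hsa.star_eq]) hD
    exact this
  have : (c : D) = 0 := by
    have h2 : ‖(c : D)‖ * ‖(c : D)‖ = 0 := by
      rw [← CStarRing.norm_self_mul_star, h0, norm_zero]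
    simpa using mul_self_eq_zero.mp h2
  exact Subtype.ext (by simpa using this)

noncomputable abbrev commSpanB : Submodule ℂ ↥B :=
  Submodule.span ℂ {y : ↥B | ∃ a b : ↥B, y = a * b - b * a}

lemma aux_comm_mul_central {c : ↥B} (hc : c ∈ Subalgebra.center ℂ ↥B)
    {w : ↥B} (hw : w ∈ commSpanB B) : w * c ∈ commSpanB B := by
  have hmap : Submodule.map (LinearMap.mulRight ℂ c) (commSpanB B) ≤ commSpanB B := by
    rw [Submodule.map_span, Submodule.span_le]
    rintro y ⟨w', ⟨a, b, rfl⟩, rfl⟩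
    refine Submodule.subset_span ⟨a, b * c, ?_⟩
    have hac : a * c = c * a := Subalgebra.mem_center_iff.mp hc a
    simp only [LinearMap.mulRight_apply]
    calc (a * b - b * a) * c = a * (b * c) - b * (a * c) := by noncomm_ring
    _ = a * (b * c) - b * (c * a) := by rw [hac]
    _ = a * (b * c) - (b * c) * a := by noncomm_ring
  exact hmap ⟨w, hw, rfl⟩

noncomputable abbrev TrB : ↥B →ₗ[ℂ] ℂ :=
  (LinearMap.trace ℂ ↥B) ∘ₗ (lmB B).toLinearMap

lemma aux_trace_vanish {y : ↥B} (hy : y ∈ commSpanB B) : TrB B y = 0 := by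
  have : commSpanB B ≤ LinearMap.ker (TrB B) := by
    rw [Submodule.span_le]
    rintro _ ⟨a, b, rfl⟩
    simp only [SetLike.mem_coe, LinearMap.mem_ker, map_sub, LinearMap.comp_apply]
    have : LinearMap.trace ℂ ↥B (lmB B (a * b)) = LinearMap.trace ℂ ↥B (lmB B (b * a)) := by
      rw [map_mul (lmB B) a b, map_mul (lmB B) b a, LinearMap.trace_mul_comm]
    simp only [AlgHom.toLinearMap_apply, LinearMap.comp_apply] at *
    rw [this]; ring
  exact LinearMap.mem_ker.mp (this hy)

lemma aux_center_inf {z : ↥B} (hz : z ∈ Subalgebra.center ℂ ↥B)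
    (hzW : z ∈ commSpanB B) : z = 0 := by
  have hpow : ∀ n : ℕ, z ^ (n + 1) ∈ commSpanB B := by
    intro n
    induction n with
    | zero => simpa using hzW
    | succ k ih =>
      have : z ^ (k + 2) = z ^ (k + 1) * z := by rw [pow_succ]
      rw [this]
      exact aux_comm_mul_central B hz ih
  have htr : ∀ n : ℕ, LinearMap.trace ℂ ↥B (lmB B (z ^ (n+1))) = 0 := by
    intro n
    have := aux_trace_vanish B (hpow n)
    simpa using this
  have hnil := aux_nilpotent_of_traces B z htr
  exact aux_nilpotentB B (Subalgebra.mem_center_iff.mp hz (star z)).symm hnil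

set_option maxHeartbeats 1000000 in
lemma aux_center_sup :
    (Subalgebra.center ℂ ↥B).toSubmodule ⊔ commSpanB B = ⊤ := by
  classical
  set Zc := (Subalgebra.center ℂ ↥B).toSubmodule with hZc
  set W := commSpanB B with hW
  -- the map c ↦ (w ∈ W ↦ trace (lm c * lm w))
  let Φ : ↥B →ₗ[ℂ] (↥W →ₗ[ℂ] ℂ) :=
    { toFun := fun c => (LinearMap.trace ℂ ↥B) ∘ₗ
        (LinearMap.mulLeft ℂ (lmB B c)) ∘ₗ (lmB B).toLinearMap ∘ₗ W.subtype
      map_add' := by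
        intro c c'
        ext w
        simp [LinearMap.mulLeft_apply, map_add, add_mul]
      map_smul' := by
        intro m c
        ext w
        simp [LinearMap.mulLeft_apply, map_smul, smul_mul_assoc] }
  have hΦ_apply : ∀ (c : ↥B) (w : ↥W),
      Φ c w = LinearMap.trace ℂ ↥B (lmB B c * lmB B (w : ↥B)) := fun c w => rfl
  have hker : LinearMap.ker Φ ≤ Zc := by
    intro c hc
    rw [LinearMap.mem_ker] at hc
    have key : ∀ a : ↥B, c * a - a * c = 0 := by
      intro a
      apply aux_traceform_nondeg B
      intro b
      have hmem : a * b - b * a ∈ W := Submodule.subset_span ⟨a, b, rfl⟩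
      have h0 : Φ c ⟨a * b - b * a, hmem⟩ = 0 := by rw [hc]; rfl
      rw [hΦ_apply] at h0
      have hexp : lmB B (c * a - a * c) * lmB B b
          = lmB B c * lmB B a * lmB B b - lmB B a * lmB B c * lmB B b := by
        rw [map_sub, map_mul (lmB B) c a, map_mul (lmB B) a c]; noncomm_ring
      rw [hexp, map_sub]
      have hcyc : LinearMap.trace ℂ ↥B (lmB B a * lmB B c * lmB B b)
          = LinearMap.trace ℂ ↥B (lmB B c * lmB B b * lmB B a) := by
        rw [LinearMap.trace_mul_cycle, LinearMap.trace_mul_cycle]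
      rw [hcyc]
      have : lmB B c * lmB B a * lmB B b - lmB B c * lmB B b * lmB B a
          = lmB B c * lmB B ((a * b - b * a)) := by
        rw [map_sub, map_mul (lmB B) a b, map_mul (lmB B) b a]; noncomm_ring
      rw [← map_sub, this]
      exact h0
    rw [hZc, Subalgebra.mem_toSubmodule, Subalgebra.mem_center_iff]
    intro a
    have := key a
    rw [sub_eq_zero] at this
    exact this.symm
  -- dimension count
  have h1 := LinearMap.finrank_range_add_finrank_ker Φ
  have h2 : finrank ℂ (LinearMap.range Φ) ≤ finrank ℂ (↥W →ₗ[ℂ] ℂ) :=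
    (LinearMap.range Φ).finrank_le
  have h3 : finrank ℂ (↥W →ₗ[ℂ] ℂ) = finrank ℂ ↥W := Subspace.dual_finrank_eq
  have h4 : finrank ℂ ↥B ≤ finrank ℂ (LinearMap.ker Φ) + finrank ℂ ↥W := by omega
  have h5 : finrank ℂ (LinearMap.ker Φ) ≤ finrank ℂ Zc := Submodule.finrank_mono hker
  have hinf : Zc ⊓ W = ⊥ := by
    rw [eq_bot_iff]
    intro z hz
    rw [Submodule.mem_bot]
    exact aux_center_inf B (Submodule.mem_inf.mp hz).1 (Submodule.mem_inf.mp hz).2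
  have h6 := Submodule.finrank_sup_add_finrank_inf_eq Zc W
  rw [hinf] at h6
  simp only [finrank_bot, add_zero] at h6
  have h7 : finrank ℂ ↥B ≤ finrank ℂ ↥(Zc ⊔ W) := by omega
  refine Submodule.eq_top_of_finrank_eq (le_antisymm (Submodule.finrank_le _) h7)

open Polynomial in
set_option maxHeartbeats 1000000 in
lemma aux_central_mem_span_proj (z : ↥B) (hz : z ∈ Subalgebra.center ℂ ↥B) :
    z ∈ Submodule.span ℂ {e : ↥B | e ∈ Subalgebra.center ℂ ↥B ∧ e * e = e} := by
  classical
  rcases subsingleton_or_nontrivial ↥B with hsub | hnt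
  · have : z = 0 := Subsingleton.elim z 0
    rw [this]; exact Submodule.zero_mem _
  have hint : IsIntegral ℂ z := Algebra.IsIntegral.isIntegral z
  set p := minpoly ℂ z with hp
  have hpm : p.Monic := minpoly.monic hint
  have hp0 : p ≠ 0 := hpm.ne_zero
  set s : Finset ℂ := p.roots.toFinset with hs'
  have haeval_center : ∀ f : ℂ[X], aeval z f ∈ Subalgebra.center ℂ ↥B := by
    intro f
    have h2 := aeval_algHom_apply (Subalgebra.center ℂ ↥B).val
      (⟨z, hz⟩ : Subalgebra.center ℂ ↥B) f
    simp only [Subalgebra.coe_val] at h2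
    rw [h2]
    exact SetLike.coe_mem _
  set q : ℂ[X] := ∏ r ∈ s, (X - C r) with hq
  have hq0 : aeval z q = 0 := by
    have hdvd : p ∣ q ^ p.natDegree := by
      have hsplit : p = (p.roots.map fun a => X - C a).prod :=
        (IsAlgClosed.splits p).eq_prod_roots_of_monic hpm
      have hcount : p = ∏ r ∈ s, (X - C r) ^ (p.roots.count r) := by
        conv_lhs => rw [hsplit]
        exact Finset.prod_multiset_map_count p.roots _
      have hdvd' : (∏ r ∈ s, (X - C r) ^ (p.roots.count r)) ∣ q ^ p.natDegree := by
        rw [hq, ← Finset.prod_pow]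
        refine Finset.prod_dvd_prod_of_dvd _ _ fun r hr => pow_dvd_pow _ ?_
        calc p.roots.count r ≤ Multiset.card p.roots := Multiset.count_le_card _ _
        _ ≤ p.natDegree := card_roots' p
      conv_lhs => rw [hcount]
      exact hdvd'
    obtain ⟨u, hu⟩ := hdvd
    have hz0 : aeval z (q ^ p.natDegree) = 0 := by
      rw [hu, map_mul]
      rw [hp, minpoly.aeval]
      rw [zero_mul]
    have hnil : IsNilpotent (aeval z q) := ⟨p.natDegree, by rwa [← map_pow]⟩
    exact aux_nilpotentB B
      ((Subalgebra.mem_center_iff.mp (haeval_center q) (star _)).symm) hnil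
  have hsne : s.Nonempty := by
    have hdeg : 0 < p.natDegree := minpoly.natDegree_pos hint
    obtain ⟨r, hr⟩ := Complex.exists_root (natDegree_pos_iff_degree_pos.mp hdeg)
    exact ⟨r, Multiset.mem_toFinset.mpr (mem_roots'.mpr ⟨hp0, hr⟩)⟩
  have hinj : Set.InjOn (_root_.id : ℂ → ℂ) s := Function.injective_id.injOn
  set e : ℂ → ↥B := fun r => aeval z (Lagrange.basis s _root_.id r) with he
  have horth : ∀ r ∈ s, ∀ r' ∈ s, r ≠ r' → e r * e r' = 0 := by
    intro r hr r' hr' hne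
    have h1 : (∏ j ∈ s.erase r, (X - C j)) ∣ Lagrange.basis s _root_.id r :=
      Finset.prod_dvd_prod_of_dvd _ _ fun j hj => Dvd.intro_left _ rfl
    have hmem : r ∈ s.erase r' := Finset.mem_erase.mpr ⟨hne, hr⟩
    have h2 : (X - C r) ∣ Lagrange.basis s _root_.id r' :=
      dvd_trans (Dvd.intro_left _ rfl) (Finset.dvd_prod_of_mem _ hmem)
    have hqd : q ∣ Lagrange.basis s _root_.id r * Lagrange.basis s _root_.id r' := by
      have hq' : q = (∏ j ∈ s.erase r, (X - C j)) * (X - C r) := by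
        rw [hq, ← Finset.mul_prod_erase s _ hr]; ring
      rw [hq']
      exact mul_dvd_mul h1 h2
    obtain ⟨u, hu⟩ := hqd
    rw [he]
    show aeval z (Lagrange.basis s _root_.id r) * aeval z (Lagrange.basis s _root_.id r') = 0
    rw [← map_mul, hu, map_mul, hq0, zero_mul]
  have hsum : ∑ r ∈ s, e r = 1 := by
    rw [he, ← map_sum, Lagrange.sum_basis hinj hsne, map_one]
  have hzer : ∀ r ∈ s, z * e r = r • e r := by
    intro r hr
    have h1 : Lagrange.basis s _root_.id r
        = (∏ j ∈ s.erase r, C ((r - j)⁻¹)) * ∏ j ∈ s.erase r, (X - C j) := by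
      unfold Lagrange.basis Lagrange.basisDivisor
      rw [← Finset.prod_mul_distrib]
      rfl
    have key : (X - C r) * Lagrange.basis s _root_.id r = (∏ j ∈ s.erase r, C ((r - j)⁻¹)) * q := by
      rw [h1, hq, ← Finset.mul_prod_erase s _ hr]; ring
    have h2 := congrArg (aeval z) key
    rw [map_mul, map_mul, hq0, mul_zero, map_sub, aeval_X, aeval_C] at h2
    have h3 : (z - algebraMap ℂ ↥B r) * e r = 0 := h2
    have h4 : z * e r = algebraMap ℂ ↥B r * e r := by
      rw [sub_mul] at h3
      rw [sub_eq_zero] at h3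
      exact h3
    rw [h4, Algebra.smul_def]
  have hz_eq : z = ∑ r ∈ s, r • e r := by
    calc z = z * 1 := (mul_one z).symm
    _ = z * ∑ r ∈ s, e r := by rw [hsum]
    _ = ∑ r ∈ s, z * e r := Finset.mul_sum _ _ _
    _ = ∑ r ∈ s, r • e r := Finset.sum_congr rfl hzer
  rw [hz_eq]
  refine Submodule.sum_mem _ fun r hr => Submodule.smul_mem _ _ (Submodule.subset_span ?_)
  refine ⟨haeval_center _, ?_⟩
  have hidem : e r * e r = e r := by
    have h5 : e r * (∑ r' ∈ s, e r') = e r * e r := by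
      rw [Finset.mul_sum, ← Finset.add_sum_erase s _ hr]
      have : ∀ r' ∈ s.erase r, e r * e r' = 0 := fun r' hr' =>
        horth r hr r' (Finset.mem_of_mem_erase hr') (Finset.ne_of_mem_erase hr').symm
      rw [Finset.sum_congr rfl this]
      simp
    rw [hsum, mul_one] at h5
    exact h5.symm
  exact hidem



lemma aux_icp_of_central_idem {e : ↥B} (he : e ∈ Subalgebra.center ℂ ↥B) (hee : e * e = e) :
    IsCentralProjection B (e : D) := by
  have hcomm : (e : D) * star (e : D) = star (e : D) * (e : D) := by
    have := Subalgebra.mem_center_iff.mp he (star e)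
    exact congrArg Subtype.val this.symm
  have hidD : (e : D) * (e : D) = (e : D) := congrArg Subtype.val hee
  refine ⟨e.2, aux_central_idem_selfadj hidD hcomm, hidD, ?_⟩
  intro b hb
  exact congrArg Subtype.val (Subalgebra.mem_center_iff.mp he ⟨b, hb⟩)

noncomputable abbrev MrangeB (e : ↥B) : Submodule ℂ ↥B := LinearMap.range (LinearMap.mulLeft ℂ e)

lemma aux_Mrange_lt {e f : ↥B} (hfe : f * e = f) (hef : e * f = f) (hff : f * f = f)
    (hne : f ≠ e) : MrangeB B f < MrangeB B e := by
  have hle : MrangeB B f ≤ MrangeB B e := by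
    rintro y ⟨b, rfl⟩
    exact ⟨f * b, by rw [LinearMap.mulLeft_apply, LinearMap.mulLeft_apply, ← mul_assoc, hef]⟩
  refine lt_of_le_of_ne hle fun hEq => ?_
  have he_mem : e ∈ MrangeB B e := ⟨1, by rw [LinearMap.mulLeft_apply, mul_one]⟩
  rw [← hEq] at he_mem
  obtain ⟨b, hb⟩ := he_mem
  rw [LinearMap.mulLeft_apply] at hb
  have h1 : f * e = e := by rw [← hb, ← mul_assoc, hff]
  exact hne (hfe ▸ h1)

lemma aux_exists_minimal (e : ↥B) (hicp : IsCentralProjection B (e : D))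
    (hne : (e : D) ≠ 0) :
    ∃ p : D, IsMinimalCentralProjection B p ∧ p * (e : D) = p := by
  generalize hn : finrank ℂ (MrangeB B e) = n
  induction n using Nat.strong_induction_on generalizing e with
  | _ n ih =>
  by_cases hmin : IsMinimalCentralProjection B (e : D)
  · exact ⟨e, hmin, hicp.2.2.1⟩
  · rw [IsMinimalCentralProjection] at hmin
    push_neg at hmin
    obtain ⟨q, hq_icp, hq_le, hq0, hqe⟩ := hmin hicp hne
    set f : ↥B := ⟨q, hq_icp.1⟩ with hf
    have hef : e * f = f := by
      apply Subtype.ext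
      have h1 : (e : D) * q = q * (e : D) := hq_icp.2.2.2 (e : D) e.2
      show (e : D) * q = q
      rw [h1, hq_le]
    have hfe : f * e = f := Subtype.ext hq_le
    have hff : f * f = f := Subtype.ext hq_icp.2.2.1
    have hne' : f ≠ e := fun h => hqe (congrArg Subtype.val h)
    have hlt := aux_Mrange_lt B hfe hef hff hne'
    obtain ⟨p, hp_min, hpq⟩ := ih (finrank ℂ (MrangeB B f))
      (hn ▸ Submodule.finrank_lt_finrank_of_lt hlt) f hq_icp hq0 rfl
    refine ⟨p, hp_min, ?_⟩
    have : p * q * (e : D) = p * q := by rw [mul_assoc, hq_le]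
    calc p * (e : D) = p * q * (e : D) := by rw [hpq]
    _ = p * q := this
    _ = p := hpq

lemma aux_proj_mem_span {N : ℕ} {P : Fin N → D}
    (hP : ∀ i, IsMinimalCentralProjection B (P i))
    (hPall : ∀ q, IsMinimalCentralProjection B q → ∃ i, q = P i)
    (e : ↥B) (hicp : IsCentralProjection B (e : D)) :
    e ∈ Submodule.span ℂ (Set.range fun i => (⟨P i, (hP i).1.1⟩ : ↥B)) := by
  generalize hn : finrank ℂ (MrangeB B e) = n
  induction n using Nat.strong_induction_on generalizing e with
  | _ n ih =>
  by_cases h0 : (e : D) = 0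
  · rw [show e = 0 from Subtype.ext h0]
    exact zero_mem _
  obtain ⟨p, hpmin, hpe⟩ := aux_exists_minimal B e hicp h0
  obtain ⟨i, rfl⟩ := hPall p hpmin
  set Qi : ↥B := (⟨P i, (hP i).1.1⟩ : ↥B) with hQi
  have hPicp := (hP i).1
  have hepD : (e : D) * P i = P i := by
    have h1 : (e : D) * P i = P i * (e : D) := hPicp.2.2.2 (e : D) e.2
    rw [h1, hpe]
  set f : ↥B := e - Qi with hfdef
  have hfco : (f : D) = (e : D) - P i := rfl
  by_cases hf0 : (f : D) = 0
  · have he' : e = Qi := by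
      have : e - Qi = 0 := Subtype.ext hf0
      rwa [sub_eq_zero] at this
    rw [he']
    exact Submodule.subset_span ⟨i, rfl⟩
  have hidem : (f : D) * (f : D) = (f : D) := by
    rw [hfco]
    calc ((e : D) - P i) * ((e : D) - P i)
        = (e:D) * (e:D) - (e:D) * P i - (P i * (e:D) - P i * P i) := by noncomm_ring
    _ = (e : D) - P i := by rw [hicp.2.2.1, hepD, hpe, hPicp.2.2.1]; abel
  have hficp : IsCentralProjection B (f : D) := by
    refine ⟨f.2, ?_, hidem, ?_⟩
    · rw [hfco]; exact hicp.2.1.sub hPicp.2.1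
    · intro b hb
      rw [hfco, mul_sub, sub_mul, hicp.2.2.2 b hb, hPicp.2.2.2 b hb]
  have hfe : f * e = f := by
    apply Subtype.ext
    show (f : D) * (e : D) = (f : D)
    rw [hfco, sub_mul, hicp.2.2.1, hpe]
  have hef : e * f = f := by
    apply Subtype.ext
    show (e : D) * (f : D) = (f : D)
    rw [hfco, mul_sub, hicp.2.2.1, hepD]
  have hff : f * f = f := Subtype.ext hidem
  have hne' : f ≠ e := by
    intro h
    have : Qi = 0 := by
      have := congrArg (fun t => e - t) h.symm
      simpa [hfdef] using this.symm
    exact (hP i).2.1 (congrArg Subtype.val this)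
  have hlt := aux_Mrange_lt B hfe hef hff hne'
  have hf_span := ih (finrank ℂ (MrangeB B f))
    (hn ▸ Submodule.finrank_lt_finrank_of_lt hlt) f hficp rfl
  have he_eq : e = f + Qi := by rw [hfdef]; abel
  rw [he_eq]
  exact add_mem hf_span (Submodule.subset_span ⟨i, rfl⟩)


end AuxSubalgebra

set_option maxHeartbeats 1000000 in
/-- Lemma 2.3. -/
theorem independent_iff_independent_of_minimal_central_projections
    (τ : D →ₗ[ℂ] ℂ) (hτ : IsTracialState τ)
    (huniq : ∀ σ : D →ₗ[ℂ] ℂ, IsTracialState σ → σ = τ)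
    (B : StarSubalgebra ℂ D) (hBfd : FiniteDimensional ℂ B)
    (N : ℕ) (P : Fin N → D)
    (hP : ∀ i, IsMinimalCentralProjection B (P i))
    (hPinj : Function.Injective P)
    (hPall : ∀ q, IsMinimalCentralProjection B q → ∃ i, q = P i)
    (x : D) (hx : ∀ b ∈ B, b * x = x * b) :
    (∀ y ∈ B, τ (x * y) = τ x * τ y) ↔ ∀ i, τ (x * P i) = τ x * τ (P i) := by
  haveI := hBfd
  constructor
  · intro h i
    exact h (P i) (hP i).1.1
  · intro h y hy
    let coeL : ↥B →ₗ[ℂ] D := B.toSubalgebra.val.toLinearMap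
    let ψ : ↥B →ₗ[ℂ] ℂ :=
      (τ ∘ₗ (LinearMap.mulLeft ℂ x) ∘ₗ coeL) - (τ x) • (τ ∘ₗ coeL)
    have hψ_apply : ∀ b : ↥B, ψ b = τ (x * (b : D)) - τ x * τ (b : D) := by
      intro b
      simp [ψ, coeL, LinearMap.mulLeft_apply, LinearMap.sub_apply, LinearMap.smul_apply,
        smul_eq_mul]
    have hW : commSpanB B ≤ LinearMap.ker ψ := by
      rw [Submodule.span_le]
      rintro _ ⟨a, b, rfl⟩
      rw [SetLike.mem_coe, LinearMap.mem_ker, hψ_apply]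
      have hco : ((a * b - b * a : ↥B) : D) = (a : D) * (b : D) - (b : D) * (a : D) := rfl
      rw [hco]
      have htr1 : τ ((a : D) * (b : D)) = τ ((b : D) * (a : D)) := hτ.2.2 _ _
      have hx1 : τ (x * ((a : D) * (b : D))) = τ (x * ((b : D) * (a : D))) := by
        calc τ (x * ((a : D) * (b : D))) = τ ((x * (a : D)) * (b : D)) := by rw [mul_assoc]
        _ = τ (((a : D) * x) * (b : D)) := by rw [← hx (a : D) a.2]
        _ = τ ((b : D) * ((a : D) * x)) := hτ.2.2 _ _
        _ = τ (((b : D) * (a : D)) * x) := by rw [mul_assoc]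
        _ = τ (x * ((b : D) * (a : D))) := hτ.2.2 _ _
      rw [mul_sub, map_sub, map_sub, hx1, htr1]
      ring
    have hQ : ∀ i, ψ (⟨P i, (hP i).1.1⟩ : ↥B) = 0 := by
      intro i
      rw [hψ_apply]
      rw [sub_eq_zero]
      exact h i
    have hZ : (Subalgebra.center ℂ ↥B).toSubmodule ≤ LinearMap.ker ψ := by
      intro z hz
      have hspan := aux_central_mem_span_proj B z hz
      have hsubset : {e : ↥B | e ∈ Subalgebra.center ℂ ↥B ∧ e * e = e}
          ⊆ ↑(LinearMap.ker ψ) := by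
        rintro eB ⟨heC, heI⟩
        rw [SetLike.mem_coe, LinearMap.mem_ker]
        have hicp := aux_icp_of_central_idem B heC heI
        have hsp := aux_proj_mem_span B hP hPall eB hicp
        have hle : Submodule.span ℂ (Set.range fun i => (⟨P i, (hP i).1.1⟩ : ↥B))
            ≤ LinearMap.ker ψ := by
          rw [Submodule.span_le]
          rintro _ ⟨i, rfl⟩
          exact hQ i
        exact hle hsp
      exact Submodule.span_le.mpr hsubset hspan
    have htop : LinearMap.ker ψ = ⊤ := by
      rw [eq_top_iff, ← aux_center_sup B]
      exact sup_le hZ hW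
    have hmem : (⟨y, hy⟩ : ↥B) ∈ LinearMap.ker ψ := htop ▸ Submodule.mem_top
    rw [LinearMap.mem_ker, hψ_apply] at hmem
    rw [sub_eq_zero] at hmem
    exact hmem
end

section
/- Let λ > 0 be a transcendental real number (equivalently, the powers 1, λ, λ², … are linearly independent over ℚ), and let G_λ be the additive subgroup of ℝ generated by {λ^n : n ∈ ℤ}. Then (1−λ)G_λ = {(1−λ)g : g ∈ G_λ} is a subgroup of G_λ, and the quotient group G_λ / (1−λ)G_λ is isomorphic to ℤ. -/
/-!
Statement 7: for a transcendental real `λ > 0`, with `G_λ` the additive subgroup of `ℝ`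
generated by `{λ^n : n ∈ ℤ}`, the set `(1-λ)G_λ` is a subgroup of `G_λ` and
`G_λ / (1-λ)G_λ ≃ ℤ`.
-/

noncomputable def eHom (l : ℝ) : (ℤ →₀ ℤ) →+ ℝ :=
  Finsupp.liftAddHom fun n => zmultiplesHom ℝ (l ^ n)

lemma eHom_single (l : ℝ) (n : ℤ) (k : ℤ) :
    eHom l (Finsupp.single n k) = k * l ^ n := by
  rw [eHom, Finsupp.liftAddHom_apply_single, zmultiplesHom_apply, zsmul_eq_mul]

noncomputable def shiftHom : (ℤ →₀ ℤ) →+ (ℤ →₀ ℤ) :=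
  Finsupp.mapDomain.addMonoidHom (· + 1)

lemma shiftHom_single (n k : ℤ) : shiftHom (Finsupp.single n k) = Finsupp.single (n + 1) k := by
  rw [shiftHom, Finsupp.mapDomain.addMonoidHom_apply, Finsupp.mapDomain_single]

noncomputable def DHom : (ℤ →₀ ℤ) →+ (ℤ →₀ ℤ) := AddMonoidHom.id _ - shiftHom

lemma DHom_apply (f : ℤ →₀ ℤ) : DHom f = f - shiftHom f := rfl

noncomputable def sumHom : (ℤ →₀ ℤ) →+ ℤ :=
  Finsupp.liftAddHom fun _ => AddMonoidHom.id ℤ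

lemma sumHom_single (n k : ℤ) : sumHom (Finsupp.single n k) = k := by rw [sumHom, Finsupp.liftAddHom_apply_single, AddMonoidHom.id_apply]

lemma eHom_shift (l : ℝ) (hl : l ≠ 0) (f : ℤ →₀ ℤ) :
    eHom l (shiftHom f) = l * eHom l f := by
  have : (eHom l).comp shiftHom = (AddMonoidHom.mulLeft l).comp (eHom l) := by
    apply Finsupp.addHom_ext
    intro n k
    simp only [AddMonoidHom.comp_apply, AddMonoidHom.coe_mulLeft, eHom_single,
      shiftHom_single]
    rw [zpow_add₀ hl, zpow_one]
    ring
  exact DFunLike.congr_fun this f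

lemma eHom_D (l : ℝ) (hl : l ≠ 0) (f : ℤ →₀ ℤ) :
    eHom l (DHom f) = (1 - l) * eHom l f := by
  rw [DHom_apply, map_sub, eHom_shift l hl]
  ring

lemma sumHom_shift (f : ℤ →₀ ℤ) : sumHom (shiftHom f) = sumHom f := by
  have : sumHom.comp shiftHom = sumHom := by
    apply Finsupp.addHom_ext
    intro n k
    simp only [AddMonoidHom.comp_apply, shiftHom_single, sumHom_single]
  exact DFunLike.congr_fun this f

lemma sumHom_D (f : ℤ →₀ ℤ) : sumHom (DHom f) = 0 := by
  rw [DHom_apply, map_sub, sumHom_shift, sub_self]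

lemma DHom_single (n k : ℤ) :
    DHom (Finsupp.single n k) = Finsupp.single n k - Finsupp.single (n + 1) k := by
  rw [DHom_apply, shiftHom_single]

lemma single_sub_single_mem (k : ℤ) : ∀ n : ℤ,
    Finsupp.single n k - Finsupp.single 0 k ∈ DHom.range := by
  intro n
  induction n using Int.induction_on with
  | zero => simpa using (AddSubgroup.zero_mem DHom.range)
  | succ m ih =>
      have h1 : Finsupp.single ((m : ℤ) + 1) k - Finsupp.single 0 k =
          (Finsupp.single (m : ℤ) k - Finsupp.single 0 k) - DHom (Finsupp.single (m : ℤ) k) := by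
        rw [DHom_single]; abel
      rw [h1]
      exact AddSubgroup.sub_mem _ ih (AddMonoidHom.mem_range.2 ⟨_, rfl⟩)
  | pred m ih =>
      have h1 : Finsupp.single (-(m : ℤ) - 1) k - Finsupp.single 0 k =
          (Finsupp.single (-(m : ℤ)) k - Finsupp.single 0 k) +
            DHom (Finsupp.single (-(m : ℤ) - 1) k) := by
        rw [DHom_single]
        have : (-(m : ℤ) - 1) + 1 = -(m : ℤ) := by ring
        rw [this]; abel
      rw [h1]
      exact AddSubgroup.add_mem _ ih (AddMonoidHom.mem_range.2 ⟨_, rfl⟩)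

lemma sub_single_sum_mem (f : ℤ →₀ ℤ) :
    f - Finsupp.single 0 (sumHom f) ∈ DHom.range := by
  induction f using Finsupp.induction with
  | zero => simpa using (AddSubgroup.zero_mem DHom.range)
  | single_add n k f hn hk ih =>
      have h1 : Finsupp.single n k + f - Finsupp.single 0 (sumHom (Finsupp.single n k + f)) =
          (Finsupp.single n k - Finsupp.single 0 k) + (f - Finsupp.single 0 (sumHom f)) := by
        rw [map_add, sumHom_single, Finsupp.single_add]
        abel
      rw [h1]
      exact AddSubgroup.add_mem _ (single_sub_single_mem k n) ih

lemma ker_sumHom : sumHom.ker = DHom.range := by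
  ext f
  constructor
  · intro hf
    have h0 : sumHom f = 0 := hf
    have := sub_single_sum_mem f
    rw [h0, Finsupp.single_zero, sub_zero] at this
    exact this
  · rintro ⟨g, rfl⟩
    exact sumHom_D g

lemma sumHom_surjective : Function.Surjective sumHom := by
  intro k
  exact ⟨Finsupp.single 0 k, sumHom_single 0 k⟩

lemma eHom_apply (l : ℝ) (f : ℤ →₀ ℤ) :
    eHom l f = ∑ n ∈ f.support, (f n : ℝ) * l ^ n := by
  rw [eHom, Finsupp.liftAddHom_apply]
  apply Finset.sum_congr rfl
  intro n _
  simp [zsmul_eq_mul]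

lemma eHom_injective (l : ℝ) (hl : 0 < l) (htr : Transcendental ℚ l) :
    Function.Injective (eHom l) := by
  rw [injective_iff_map_eq_zero]
  intro f hf
  set N : ℕ := f.support.sup (fun n => n.natAbs) with hN
  have hsupp : ∀ n ∈ f.support, (0 : ℤ) ≤ n + N := by
    intro n hn
    have h1 : n.natAbs ≤ N := Finset.le_sup (f := fun n : ℤ => n.natAbs) hn
    omega
  set p : Polynomial ℚ :=
    ∑ n ∈ f.support, Polynomial.C ((f n : ℚ)) * Polynomial.X ^ (n + N).toNat with hp
  have haeval : Polynomial.aeval l p = 0 := by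
    rw [hp, map_sum]
    have : ∀ n ∈ f.support,
        Polynomial.aeval l (Polynomial.C ((f n : ℚ)) * Polynomial.X ^ (n + N).toNat)
          = l ^ (N : ℤ) * ((f n : ℝ) * l ^ n) := by
      intro n hn
      rw [map_mul, map_pow, Polynomial.aeval_C, Polynomial.aeval_X]
      have h1 : l ^ ((n + N).toNat) = l ^ ((n : ℤ) + N) := by
        rw [← zpow_natCast, Int.toNat_of_nonneg (hsupp n hn)]
      rw [h1, zpow_add₀ hl.ne', zpow_natCast]
      simp only [eq_ratCast]
      push_cast
      ring
    rw [Finset.sum_congr rfl this, ← Finset.mul_sum, ← eHom_apply, hf, mul_zero]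
  have hp0 : p = 0 := (transcendental_iff.mp htr) p haeval
  ext n
  by_cases hn : n ∈ f.support
  · have hc : p.coeff ((n + N).toNat) = (f n : ℚ) := by
      rw [hp, Polynomial.finset_sum_coeff]
      have : ∀ m ∈ f.support,
          (Polynomial.C ((f m : ℚ)) * Polynomial.X ^ (m + N).toNat).coeff ((n + N).toNat)
            = if m = n then (f m : ℚ) else 0 := by
        intro m hm
        rw [Polynomial.coeff_C_mul, Polynomial.coeff_X_pow]
        by_cases h : m = n
        · subst h; simp
        · have : ¬ ((n + N).toNat = (m + N).toNat) := by
            intro heq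
            apply h
            have := congrArg (fun t : ℕ => (t : ℤ)) heq
            simp only [Int.toNat_of_nonneg (hsupp n hn), Int.toNat_of_nonneg (hsupp m hm)] at this
            omega
          rw [if_neg this, mul_zero, if_neg h]
      rw [Finset.sum_congr rfl this, Finset.sum_ite_eq' f.support n fun m => ((f m : ℚ))]
      rw [if_pos hn]
    rw [hp0, Polynomial.coeff_zero] at hc
    exact_mod_cast hc.symm
  · simpa using Finsupp.notMem_support_iff.mp hn

lemma eHom_range (l : ℝ) :
    (eHom l).range = AddSubgroup.closure (Set.range fun n : ℤ => l ^ n) := by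
  apply le_antisymm
  · rintro x ⟨f, rfl⟩
    induction f using Finsupp.induction with
    | zero => simpa using AddSubgroup.zero_mem _
    | single_add n k f hn hk ih =>
        rw [map_add]
        refine AddSubgroup.add_mem _ ?_ ih
        rw [eHom_single, ← zsmul_eq_mul]
        exact AddSubgroup.zsmul_mem _ (AddSubgroup.subset_closure (Set.mem_range.mpr ⟨n, rfl⟩)) k
  · rw [AddSubgroup.closure_le]
    rintro x ⟨n, rfl⟩
    exact AddMonoidHom.mem_range.mpr ⟨Finsupp.single n 1, by rw [eHom_single]; simp⟩

theorem quotient_iso_int_of_transcendental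
    (l : ℝ) (hl : 0 < l) (htr : Transcendental ℚ l)
    (G : AddSubgroup ℝ)
    (hG : G = AddSubgroup.closure (Set.range fun n : ℤ => l ^ n))
    (H : AddSubgroup ℝ)
    (hH : H = AddSubgroup.map (AddMonoidHom.mulLeft (1 - l)) G) :
    H ≤ G ∧ Nonempty ((G ⧸ H.addSubgroupOf G) ≃+ ℤ) := by
  have hl0 : l ≠ 0 := hl.ne'
  have hrange : (eHom l).range = G := by rw [hG]; exact eHom_range l
  have hinj := eHom_injective l hl htr
  have hmul : ∀ f : ℤ →₀ ℤ, (AddMonoidHom.mulLeft (1 - l)) (eHom l f) = eHom l (DHom f) := by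
    intro f
    rw [AddMonoidHom.coe_mulLeft]
    exact (eHom_D l hl0 f).symm
  have hHG : H ≤ G := by
    rw [hH]
    rintro x ⟨g, hg, rfl⟩
    rw [← hrange] at hg ⊢
    obtain ⟨f, rfl⟩ := hg
    rw [hmul f]
    exact AddMonoidHom.mem_range.mpr ⟨DHom f, rfl⟩
  refine ⟨hHG, ?_⟩
  let E : (ℤ →₀ ℤ) ≃+ G :=
    (AddMonoidHom.ofInjective hinj).trans (AddEquiv.addSubgroupCongr hrange)
  have hE : ∀ f : ℤ →₀ ℤ, ((E f : G) : ℝ) = eHom l f := fun f => rfl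
  have hEs : ∀ x : G, eHom l (E.symm x) = (x : ℝ) := by
    intro x
    rw [← hE (E.symm x), E.apply_symm_apply]
  let φ : G →+ ℤ := sumHom.comp E.symm.toAddMonoidHom
  have hsurj : Function.Surjective φ := sumHom_surjective.comp E.symm.surjective
  have hker : φ.ker = H.addSubgroupOf G := by
    ext x
    simp only [φ, AddMonoidHom.mem_ker, AddMonoidHom.comp_apply, AddEquiv.coe_toAddMonoidHom,
      AddSubgroup.mem_addSubgroupOf]
    constructor
    · intro hx
      have hx' : E.symm x ∈ DHom.range := by
        rw [← ker_sumHom]; exact hx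
      obtain ⟨g, hg⟩ := hx'
      rw [hH]
      refine ⟨eHom l g, ?_, ?_⟩
      · rw [hG, ← eHom_range l]; exact AddMonoidHom.mem_range.mpr ⟨g, rfl⟩
      · rw [hmul g, hg, hEs]
    · intro hx
      rw [hH] at hx
      obtain ⟨g, hg, hgx⟩ := hx
      rw [hG, ← eHom_range l] at hg
      obtain ⟨f, rfl⟩ := hg
      rw [hmul f, ← hEs x] at hgx
      have : DHom f = E.symm x := hinj hgx
      rw [← this]
      exact sumHom_D f
  exact ⟨hker ▸ QuotientAddGroup.quotientKerEquivOfSurjective φ hsurj⟩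
end

section
/- Let λ > 0 with λ ≠ 1 be an algebraic real number, and suppose the ideal {f ∈ ℤ[t] : f(λ) = 0} of the polynomial ring ℤ[t] is generated by a polynomial p(t) ∈ ℤ[t]. Let G_λ be the additive subgroup of ℝ generated by {λ^n : n ∈ ℤ}. Then the quotient group G_λ / (1−λ)G_λ is isomorphic to ℤ/p(1)ℤ. -/
/-!
Statement 8: let `λ > 0`, `λ ≠ 1`, be an algebraic real number such that the ideal
`{f ∈ ℤ[t] : f(λ) = 0}` of `ℤ[t]` is generated by `p(t)`.  With `G_λ` the additive
subgroup of `ℝ` generated by `{λ^n : n ∈ ℤ}`, the quotient `G_λ / (1-λ)G_λ` is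
isomorphic to `ℤ / p(1)ℤ`.
-/

open Finsupp Polynomial

/-- Evaluation of a "Laurent polynomial" (given as `ℤ →₀ ℤ`) at `l`. -/
noncomputable def eHomAux (l : ℝ) : (ℤ →₀ ℤ) →+ ℝ :=
  Finsupp.liftAddHom fun n => zmultiplesHom ℝ (l ^ n)

/-- Evaluation at 1 : sum of coefficients. -/
noncomputable def wHomAux : (ℤ →₀ ℤ) →+ ℤ :=
  Finsupp.liftAddHom fun _ => AddMonoidHom.id ℤ

/-- Shift: multiplication by `t`. -/
noncomputable def sHomAux : (ℤ →₀ ℤ) →+ (ℤ →₀ ℤ) :=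
  Finsupp.mapDomain.addMonoidHom (· + 1)

lemma eHomAux_single (l : ℝ) (n : ℤ) (a : ℤ) :
    eHomAux l (Finsupp.single n a) = a • l ^ n := by
  rw [eHomAux, Finsupp.liftAddHom_apply_single]; rfl

lemma eHomAux_apply (l : ℝ) (f : ℤ →₀ ℤ) :
    eHomAux l f = f.sum fun n a => a • l ^ n := by
  rw [eHomAux, Finsupp.liftAddHom_apply]; rfl

lemma wHomAux_apply (f : ℤ →₀ ℤ) : wHomAux f = f.sum fun _ a => a := by
  rw [wHomAux, Finsupp.liftAddHom_apply]; rfl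

lemma eHomAux_sHomAux (l : ℝ) (hl0 : l ≠ 0) (g : ℤ →₀ ℤ) :
    eHomAux l (sHomAux g) = l * eHomAux l g := by
  rw [eHomAux_apply, eHomAux_apply, sHomAux, Finsupp.mapDomain.addMonoidHom_apply,
    Finsupp.sum_mapDomain_index (by simp) (by intros; rw [add_smul])]
  rw [Finsupp.mul_sum]
  refine Finsupp.sum_congr fun n _ => ?_
  rw [zpow_add_one₀ hl0, zsmul_eq_mul, zsmul_eq_mul]
  ring

lemma wHomAux_sHomAux (g : ℤ →₀ ℤ) : wHomAux (sHomAux g) = wHomAux g := by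
  rw [wHomAux_apply, wHomAux_apply, sHomAux, Finsupp.mapDomain.addMonoidHom_apply,
    Finsupp.sum_mapDomain_index (by simp) (by intros; rfl)]

/-- Key lemma: if a Laurent polynomial vanishes at `l`, then `p(1)` divides its
coefficient sum. -/
lemma key_dvd (l : ℝ) (hl0 : l ≠ 0) (p : Polynomial ℤ)
    (hp : ∀ f : Polynomial ℤ, Polynomial.aeval l f = 0 ↔ p ∣ f)
    (f : ℤ →₀ ℤ) (hf : eHomAux l f = 0) : p.eval 1 ∣ wHomAux f := by
  set N : ℕ := f.support.sup fun n => (-n).toNat with hN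
  have hNn : ∀ n ∈ f.support, (0 : ℤ) ≤ n + N := by
    intro n hn
    have h1 : (-n).toNat ≤ N := Finset.le_sup (f := fun n => (-n).toNat) hn
    have h2 : -n ≤ ((-n).toNat : ℤ) := Int.self_le_toNat _
    have h3 : (((-n).toNat : ℤ)) ≤ (N : ℤ) := by exact_mod_cast h1
    omega
  set q : Polynomial ℤ := ∑ n ∈ f.support, Polynomial.C (f n) * Polynomial.X ^ (n + N).toNat
    with hq
  have hq0 : Polynomial.aeval l q = 0 := by
    have : Polynomial.aeval l q = (eHomAux l f) * l ^ (N : ℤ) := by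
      rw [hq, map_sum, eHomAux_apply, Finsupp.sum, Finset.sum_mul]
      refine Finset.sum_congr rfl fun n hn => ?_
      rw [map_mul, map_pow, Polynomial.aeval_C, Polynomial.aeval_X]
      have : (l ^ (n + (N : ℤ)).toNat) = l ^ (n + (N : ℤ)) := by
        rw [← zpow_natCast, Int.toNat_of_nonneg (hNn n hn)]
      rw [this, zpow_add₀ hl0]
      simp only [algebraMap_int_eq, eq_intCast, zsmul_eq_mul]
      ring
    rw [this, hf, zero_mul]
  obtain ⟨r, hr⟩ := (hp q).mp hq0
  have hq1 : q.eval 1 = wHomAux f := by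
    rw [hq, wHomAux_apply, Finsupp.sum, Polynomial.eval_finset_sum]
    refine Finset.sum_congr rfl fun n hn => by simp
  refine ⟨r.eval 1, ?_⟩
  rw [← hq1, hr, Polynomial.eval_mul]

theorem quotient_iso_zmod_of_algebraic
    (l : ℝ) (hl : 0 < l) (hl1 : l ≠ 1) (halg : IsAlgebraic ℚ l)
    (p : Polynomial ℤ)
    (hp : ∀ f : Polynomial ℤ, Polynomial.aeval l f = 0 ↔ p ∣ f)
    (G : AddSubgroup ℝ)
    (hG : G = AddSubgroup.closure (Set.range fun n : ℤ => l ^ n))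
    (H : AddSubgroup ℝ)
    (hH : H = AddSubgroup.map (AddMonoidHom.mulLeft (1 - l)) G) :
    Nonempty ((G ⧸ H.addSubgroupOf G) ≃+
      (ℤ ⧸ AddSubgroup.zmultiples (Polynomial.eval 1 p))) := by
  have hl0 : l ≠ 0 := ne_of_gt hl
  -- powers belong to G
  have hpowG : ∀ n : ℤ, l ^ n ∈ G := by
    intro n
    rw [hG]
    exact AddSubgroup.subset_closure ⟨n, rfl⟩
  -- the range of eHomAux is contained in G
  have hrange : ∀ f : ℤ →₀ ℤ, eHomAux l f ∈ G := by
    intro f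
    induction f using Finsupp.induction with
    | zero => rw [map_zero]; exact G.zero_mem
    | single_add n a f _ _ ih =>
      rw [map_add, eHomAux_single]
      exact AddSubgroup.add_mem _ (AddSubgroup.zsmul_mem _ (hpowG n) a) ih
  -- every element of G is in the range
  have hsurj : ∀ x : ℝ, x ∈ G → ∃ f : ℤ →₀ ℤ, eHomAux l f = x := by
    intro x hx
    rw [hG] at hx
    induction hx using AddSubgroup.closure_induction with
    | mem x hx =>
      obtain ⟨n, rfl⟩ := hx
      exact ⟨Finsupp.single n 1, by rw [eHomAux_single, one_smul]⟩
    | zero => exact ⟨0, by simp⟩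
    | add x y _ _ hx hy =>
      obtain ⟨f, rfl⟩ := hx; obtain ⟨g, rfl⟩ := hy
      exact ⟨f + g, by simp⟩
    | neg x _ hx =>
      obtain ⟨f, rfl⟩ := hx
      exact ⟨-f, by simp⟩
  -- membership in H
  have hmemH : ∀ x : ℝ, x ∈ H ↔ ∃ y ∈ G, (1 - l) * y = x := by
    intro x
    rw [hH]
    constructor
    · rintro ⟨y, hy, rfl⟩; exact ⟨y, hy, rfl⟩
    · rintro ⟨y, hy, rfl⟩; exact ⟨y, hy, rfl⟩
  -- l^n - 1 ∈ H for all n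
  have hpow1 : ∀ n : ℤ, l ^ n - 1 ∈ H := by
    intro n
    induction n using Int.induction_on with
    | zero => simpa using H.zero_mem
    | succ n ih =>
      have h1 : l ^ ((n : ℤ) + 1) - l ^ (n : ℤ) ∈ H := by
        rw [hmemH]
        refine ⟨-(l ^ (n : ℤ)), AddSubgroup.neg_mem _ (hpowG n), ?_⟩
        rw [zpow_add_one₀ hl0]
        ring
      have := AddSubgroup.add_mem _ h1 ih
      convert this using 1; ring
    | pred n ih =>
      have h1 : l ^ (-(n : ℤ) - 1) - l ^ (-(n : ℤ)) ∈ H := by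
        rw [hmemH]
        refine ⟨l ^ (-(n : ℤ) - 1), hpowG _, ?_⟩
        have : l ^ (-(n : ℤ)) = l ^ (-(n : ℤ) - 1) * l := by
          rw [← zpow_add_one₀ hl0]; ring_nf
        rw [this]; ring
      have := AddSubgroup.add_mem _ h1 ih
      convert this using 1; ring
    -- p(1) • (1:ℝ) ∈ H
  have hp1H : (p.eval 1 : ℤ) • (1 : ℝ) ∈ H := by
    have hpl : Polynomial.aeval l p = 0 := (hp p).mpr dvd_rfl
    have main : ∀ q : Polynomial ℤ, (q.eval 1 : ℤ) • (1 : ℝ) - Polynomial.aeval l q ∈ H := by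
      intro q
      induction q using Polynomial.induction_on' with
      | add q r hq hr =>
        have := AddSubgroup.add_mem _ hq hr
        convert this using 1
        simp only [Polynomial.eval_add, map_add, add_smul]
        abel
      | monomial n a =>
        have : ((Polynomial.monomial n a).eval 1 : ℤ) • (1 : ℝ)
            - Polynomial.aeval l (Polynomial.monomial n a) = (-a) • (l ^ (n : ℤ) - 1) := by
          rw [Polynomial.eval_monomial, Polynomial.aeval_monomial]
          push_cast
          rw [zpow_natCast]
          simp [Algebra.algebraMap_self]
          ring
        rw [this]
        exact AddSubgroup.zsmul_mem _ (hpow1 n) _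
    have := main p
    rwa [hpl, sub_zero] at this
  -- main equivalence of kernels:  eHomAux f ∈ H  ↔  p(1) ∣ wHomAux f
  have hker : ∀ f : ℤ →₀ ℤ, eHomAux l f ∈ H ↔ p.eval 1 ∣ wHomAux f := by
    intro f
    constructor
    · intro hf
      rw [hmemH] at hf
      obtain ⟨y, hy, hxy⟩ := hf
      obtain ⟨g, rfl⟩ := hsurj y hy
      set h := f - g + sHomAux g with hh
      have hh0 : eHomAux l h = 0 := by
        rw [hh, map_add, map_sub, eHomAux_sHomAux l hl0, ← hxy]
        ring
      have := key_dvd l hl0 p hp h hh0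
      rwa [hh, map_add, map_sub, wHomAux_sHomAux, sub_add_cancel] at this
    · intro hf
      obtain ⟨k, hk⟩ := hf
      -- eHomAux f = (wHomAux f) • 1 + Σ f n • (l^n - 1)
      have hsplit : eHomAux l f - (wHomAux f : ℤ) • (1 : ℝ) ∈ H := by
        rw [eHomAux_apply, wHomAux_apply, Finsupp.sum, Finsupp.sum, Finset.sum_smul,
          ← Finset.sum_sub_distrib]
        refine AddSubgroup.sum_mem _ fun n _ => ?_
        have : (f n) • l ^ n - (f n) • (1 : ℝ) = (f n) • (l ^ n - 1) := by
          rw [smul_sub]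
        rw [this]
        exact AddSubgroup.zsmul_mem _ (hpow1 n) _
      have hw : (wHomAux f : ℤ) • (1 : ℝ) ∈ H := by
        rw [hk, mul_comm, mul_smul]
        exact AddSubgroup.zsmul_mem _ hp1H _
      have := AddSubgroup.add_mem _ hsplit hw
      rwa [sub_add_cancel] at this
  -- now build the two surjections and compare kernels
  let eG : (ℤ →₀ ℤ) →+ G := (eHomAux l).codRestrict G hrange
  let π₁ : (ℤ →₀ ℤ) →+ (G ⧸ H.addSubgroupOf G) :=
    (QuotientAddGroup.mk' (H.addSubgroupOf G)).comp eG
  let π₂ : (ℤ →₀ ℤ) →+ (ℤ ⧸ AddSubgroup.zmultiples (p.eval 1)) :=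
    (QuotientAddGroup.mk' (AddSubgroup.zmultiples (p.eval 1))).comp wHomAux
  have hπ₁s : Function.Surjective π₁ := by
    refine (QuotientAddGroup.mk'_surjective _).comp ?_
    rintro ⟨x, hx⟩
    obtain ⟨f, hf⟩ := hsurj x hx
    exact ⟨f, Subtype.ext hf⟩
  have hπ₂s : Function.Surjective π₂ := by
    refine (QuotientAddGroup.mk'_surjective _).comp ?_
    intro k
    exact ⟨Finsupp.single 0 k, by rw [wHomAux_apply, Finsupp.sum_single_index]; rfl⟩
  have hkereq : π₁.ker = π₂.ker := by
    ext f
    simp only [AddMonoidHom.mem_ker, π₁, π₂, AddMonoidHom.comp_apply,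
      QuotientAddGroup.mk'_apply, QuotientAddGroup.eq_zero_iff]
    rw [AddSubgroup.mem_addSubgroupOf]
    have h1 : ((eG f : G) : ℝ) = eHomAux l f := rfl
    rw [h1, hker f, AddSubgroup.mem_zmultiples_iff]
    constructor
    · rintro ⟨c, hc⟩; exact ⟨c, by rw [smul_eq_mul, hc, mul_comm]⟩
    · rintro ⟨c, hc⟩; exact ⟨c, by rw [← hc, smul_eq_mul, mul_comm]⟩
  exact ⟨((QuotientAddGroup.quotientKerEquivOfSurjective π₁ hπ₁s).symm.trans
    (QuotientAddGroup.quotientAddEquivOfEq hkereq)).trans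
    (QuotientAddGroup.quotientKerEquivOfSurjective π₂ hπ₂s)⟩
end
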